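/- Let G be an abelian group and φ, ψ injective commuting endomorphisms of G such that G/φ(G) and G/ψ(G) are both finite. Then the following are equivalent: (a) φ(G) + ψ(G) = G; (b) the inclusion φ(G) → G induces an isomorphism φ(G)/(φ(G) ∩ ψ(G)) ≅ G/ψ(G); (c) φ(G) ∩ ψ(G) = φψ(G). -/

import Mathlib

theorem stmt0 {G : Type*} [AddCommGroup G] (φ ψ : G →+ G)
    (hφ : Function.Injective φ) (hψ : Function.Injective ψ)
    (hc : φ.comp ψ = ψ.comp φ)
    (h1 : Finite (G ⧸ φ.range)) (h2 : Finite (G ⧸ ψ.range)) :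
    List.TFAE [
      φ.range ⊔ ψ.range = ⊤,
      ∃ e : (φ.range ⧸ ((φ.range ⊓ ψ.range).addSubgroupOf φ.range)) ≃+ (G ⧸ ψ.range),
        ∀ x : φ.range, e (QuotientAddGroup.mk x) = QuotientAddGroup.mk (x : G),
      φ.range ⊓ ψ.range = (φ.comp ψ).range] := by
  set A := φ.range
  set B := ψ.range
  set C := (φ.comp ψ).range with hCdef
  have hCA : C ≤ A := by
    rintro _ ⟨g, rfl⟩; exact ⟨ψ g, rfl⟩
  have hCB : C ≤ B := by
    rintro _ ⟨g, rfl⟩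
    exact ⟨φ g, by rw [← AddMonoidHom.comp_apply, ← hc, AddMonoidHom.comp_apply]⟩
  have hCAB : C ≤ A ⊓ B := le_inf hCA hCB
  -- index computations
  have hcomap : C.comap φ = B := by
    ext x
    constructor
    · rintro ⟨g, hg⟩
      have : φ (ψ g) = φ x := hg
      exact ⟨g, hφ this⟩
    · rintro ⟨g, rfl⟩
      exact ⟨g, rfl⟩
  have key1 : C.relIndex A = B.index := by
    rw [← hcomap, AddSubgroup.index_comap]
  have key2 : (A ⊓ B).relIndex A = B.relIndex (A ⊔ B) := by
    rw [inf_comm, AddSubgroup.inf_relIndex_right, AddSubgroup.relIndex_sup_right]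
  have hBindex : B.index ≠ 0 := AddSubgroup.index_ne_zero_of_finite
  have chain : C.relIndex (A ⊓ B) * (A ⊓ B).relIndex A = B.index := by
    rw [AddSubgroup.relIndex_mul_relIndex C (A ⊓ B) A hCAB inf_le_left, key1]
  have tower : B.relIndex (A ⊔ B) * (A ⊔ B).index = B.index :=
    AddSubgroup.relIndex_mul_index le_sup_right
  have hr : B.relIndex (A ⊔ B) ≠ 0 := fun h => hBindex (by rw [← tower, h, zero_mul])
  have keyeq : C.relIndex (A ⊓ B) = (A ⊔ B).index := by
    apply Nat.eq_of_mul_eq_mul_right (Nat.pos_of_ne_zero hr)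
    rw [← key2, chain, key2, mul_comm, tower]
  tfae_have 1 → 3
  | h => by
    have h1' : (A ⊔ B).index = 1 := by rw [h, AddSubgroup.index_top]
    have : (A ⊓ B) ≤ C := AddSubgroup.relIndex_eq_one.mp (by rw [keyeq, h1'])
    exact le_antisymm this hCAB
  tfae_have 3 → 1
  | h => by
    have : C.relIndex (A ⊓ B) = 1 := by rw [h]; exact AddSubgroup.relIndex_self _
    exact AddSubgroup.index_eq_one.mp (by rw [← keyeq, this])
  tfae_have 1 → 2
  | h => by
    set f : A →+ G ⧸ B := (QuotientAddGroup.mk' B).comp A.subtype with hf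
    have hfsurj : Function.Surjective f := by
      intro q
      obtain ⟨g, rfl⟩ := QuotientAddGroup.mk_surjective q
      have hg : g ∈ A ⊔ B := h ▸ AddSubgroup.mem_top g
      obtain ⟨a, ha, b, hb, rfl⟩ := AddSubgroup.mem_sup.mp hg
      refine ⟨⟨a, ha⟩, ?_⟩
      show QuotientAddGroup.mk a = QuotientAddGroup.mk (a + b)
      rw [QuotientAddGroup.eq]
      simpa using B.neg_mem hb
    have hker : f.ker = (A ⊓ B).addSubgroupOf A := by
      ext x
      simp only [AddMonoidHom.mem_ker, hf, AddMonoidHom.comp_apply,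
        AddSubgroup.coe_subtype, QuotientAddGroup.mk'_apply,
        QuotientAddGroup.eq_zero_iff, AddSubgroup.mem_addSubgroupOf,
        AddSubgroup.mem_inf]
      exact ⟨fun hx => ⟨x.2, hx⟩, fun hx => hx.2⟩
    refine ⟨(QuotientAddGroup.quotientAddEquivOfEq hker.symm).trans
      (QuotientAddGroup.quotientKerEquivOfSurjective f hfsurj), fun x => ?_⟩
    simp only [AddEquiv.trans_apply, QuotientAddGroup.quotientAddEquivOfEq_mk]
    rfl
  tfae_have 2 → 1
  | ⟨e, he⟩ => by
    rw [eq_top_iff]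
    intro g _
    obtain ⟨q, hq⟩ := e.surjective (QuotientAddGroup.mk g)
    obtain ⟨x, rfl⟩ := QuotientAddGroup.mk_surjective q
    rw [he x] at hq
    have : -(x : G) + g ∈ B := (QuotientAddGroup.eq).mp hq
    have : g = (x : G) + (-(x : G) + g) := by abel_nf
    rw [this]
    exact AddSubgroup.add_mem_sup x.2 ‹-(x : G) + g ∈ B›
  tfae_finish
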